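/- Let (X, f, ε) be an exterior discrete semi-flow and suppose X is Lagrange stable at every point of PA(L̄(X)). Then PA(L̄(X)) \ WA(L̄(X) \ L(X)) ⊆ D̄(X). -/

import Mathlib

open Set Topology

/-- The omega-limit set of a point `x` under the discrete semi-flow generated by `f`:
`Λ(x) = ⋂ₙ closure {f^[m] x : m ≥ n}`. -/
def Lambda {X : Type*} [TopologicalSpace X] (f : X → X) (x : X) : Set X :=
  ⋂ n : ℕ, closure ((fun m => f^[m] x) '' Set.Ici n)

/-- The omega-limit set of a subset `S`: `Λ(S) = ⋃_{x ∈ S} Λ(x)`. -/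
def LambdaSet {X : Type*} [TopologicalSpace X] (f : X → X) (S : Set X) : Set X :=
  ⋃ x ∈ S, Lambda f x

/-- The region of pseudo-attraction of `S`: `PA(S) = {x : Λ(x) ⊆ S}`. -/
def PA {X : Type*} [TopologicalSpace X] (f : X → X) (S : Set X) : Set X :=
  {x | Lambda f x ⊆ S}

/-- The region of weak-attraction of `S`: `WA(S) = {x : Λ(x) ∩ S ≠ ∅}`. -/
def WA {X : Type*} [TopologicalSpace X] (f : X → X) (S : Set X) : Set X :=
  {x | (Lambda f x ∩ S).Nonempty}

/-- The region of attraction of `S`: `A(S) = {x : ∅ ≠ Λ(x) ⊆ S}`. -/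
def RA {X : Type*} [TopologicalSpace X] (f : X → X) (S : Set X) : Set X :=
  {x | (Lambda f x).Nonempty ∧ Lambda f x ⊆ S}

/-- `X` is (positively) Lagrange stable at `x` if the closure of the trajectory of `x`
is compact. -/
def LagrangeStableAt {X : Type*} [TopologicalSpace X] (f : X → X) (x : X) : Prop :=
  IsCompact (closure (Set.range fun n : ℕ => f^[n] x))

/-- An externology on a topological space: a nonempty family of open sets closed under
finite intersections such that any open set containing a member belongs to the family. -/
def IsExternology {X : Type*} [TopologicalSpace X] (ε : Set (Set X)) : Prop :=
  ε.Nonempty ∧ (∀ E ∈ ε, IsOpen E) ∧ (∀ E ∈ ε, ∀ F ∈ ε, E ∩ F ∈ ε) ∧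
    (∀ E ∈ ε, ∀ U : Set X, IsOpen U → E ⊆ U → U ∈ ε)

/-- The limit space of an externology: `L(X) = ⋂_{E ∈ ε} E`. -/
def limitSpace {X : Type*} (ε : Set (Set X)) : Set X := ⋂ E ∈ ε, E

/-- The bar-limit space of an externology: `L̄(X) = ⋂_{E ∈ ε} closure E`. -/
def barLimit {X : Type*} [TopologicalSpace X] (ε : Set (Set X)) : Set X :=
  ⋂ E ∈ ε, closure E

/-- The region of pseudo-attraction of the externology:
`D(X) = {x : ∀ E ∈ ε, f^[m] x ∈ E for all large m}`. -/
def Dregion {X : Type*} (f : X → X) (ε : Set (Set X)) : Set X :=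
  {x | ∀ E ∈ ε, ∃ n : ℕ, ∀ m ≥ n, f^[m] x ∈ E}

/-- The region of pseudo-bar-attraction of the externology:
`D̄(X) = {x : ∀ E ∈ ε, f^[m] x ∈ closure E for all large m}`. -/
def Dbar {X : Type*} [TopologicalSpace X] (f : X → X) (ε : Set (Set X)) : Set X :=
  {x | ∀ E ∈ ε, ∃ n : ℕ, ∀ m ≥ n, f^[m] x ∈ closure E}

/-- A right-absorbing open subset: an open set that eventually contains the trajectory
of every point. -/
def RightAbsorbing {X : Type*} [TopologicalSpace X] (f : X → X) (E : Set X) : Prop :=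
  IsOpen E ∧ ∀ y : X, ∃ n : ℕ, ∀ m ≥ n, f^[m] y ∈ E

/-- A point `x` is periodic if `f^[n] x = x` for some `n ≥ 1`. -/
def IsPeriodicPoint {X : Type*} (f : X → X) (x : X) : Prop := ∃ n ≥ 1, f^[n] x = x

theorem stmt11 {X : Type*} [TopologicalSpace X] (f : X → X) (hf : Continuous f)
    (ε : Set (Set X)) (hε : IsExternology ε) (hflow : ∀ E ∈ ε, f ⁻¹' E ∈ ε)
    (hL : ∀ x ∈ PA f (barLimit ε), LagrangeStableAt f x) :
    PA f (barLimit ε) \ WA f (barLimit ε \ limitSpace ε) ⊆ Dbar f ε := by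
  rintro x ⟨hPA, hWA⟩
  intro E hE
  have hEopen : IsOpen E := hε.2.1 E hE
  -- Λ x ⊆ E
  have hsub : Lambda f x ⊆ E := by
    intro y hy
    have h1 : y ∈ barLimit ε := hPA hy
    have h3 : y ∈ limitSpace ε := by
      by_contra h
      exact hWA ⟨y, hy, h1, h⟩
    exact Set.mem_iInter₂.mp h3 E hE
  set T : ℕ → Set X := fun n => closure ((fun m => f^[m] x) '' Set.Ici n) with hT
  have hK : IsCompact (T 0) := by
    have h := hL x hPA
    unfold LagrangeStableAt at h
    convert h using 2
    ext y
    simp [Set.mem_image, Set.mem_range]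
  have hmono : ∀ m n : ℕ, m ≤ n → T n ⊆ T m := fun m n h =>
    closure_mono (Set.image_mono (Set.Ici_subset_Ici.mpr h))
  have hempty : T 0 ∩ ⋂ n : ℕ, (T n ∩ Eᶜ) = ∅ := by
    apply Set.eq_empty_of_forall_notMem
    intro y hy
    have hyL : y ∈ Lambda f x := Set.mem_iInter.mpr fun n =>
      (Set.mem_iInter.mp hy.2 n).1
    exact (Set.mem_iInter.mp hy.2 0).2 (hsub hyL)
  obtain ⟨t, ht⟩ := hK.elim_finite_subfamily_closed _
    (fun n => (isClosed_closure).inter hEopen.isClosed_compl) hempty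
  set N := t.sup id with hN
  have hTN : T N ⊆ E := by
    intro y hy
    by_contra hyE
    have : y ∈ T 0 ∩ ⋂ n ∈ t, (T n ∩ Eᶜ) := by
      refine ⟨hmono 0 N (Nat.zero_le _) hy, Set.mem_iInter₂.mpr fun n hn => ?_⟩
      exact ⟨hmono n N (Finset.le_sup (f := id) hn) hy, hyE⟩
    rw [ht] at this
    exact this
  refine ⟨N, fun m hm => ?_⟩
  have : f^[m] x ∈ T N := subset_closure ⟨m, hm, rfl⟩
  exact subset_closure (hTN this)
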